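/- A live NFA G with no unobservable cycles is concealable with respect to P and E_S = {s} if and only if its diagnoser G_d contains no secret cycle (no cycle all of whose states consist solely of pairs labeled S). -/

import Mathlib

variable {X E : Type}

def nstep (f : X → E → Set X) (S : Set X) (a : E) : Set X :=
  {y | ∃ x ∈ S, y ∈ f x a}

def nsteps (f : X → E → Set X) (S : Set X) (w : List E) : Set X :=
  w.foldl (nstep f) S

def lang (f : X → E → Set X) (x0 : X) : Set (List E) :=
  {w | (nsteps f {x0} w).Nonempty}

def proj (obs : E → Bool) (w : List E) : List E := w.filter obs

def dstep [DecidableEq E] (f : X → E → Set X) (obs : E → Bool) (s : E)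
    (q : Set (X × Bool)) (e : E) : Set (X × Bool) :=
  {p | ∃ xl ∈ q, ∃ w : List E,
    proj obs w = [e] ∧ p.1 ∈ nsteps f {xl.1} w ∧ p.2 = (xl.2 || decide (s ∈ w))}

def dinit [DecidableEq E] (f : X → E → Set X) (obs : E → Bool) (s : E) (x0 : X) :
    Set (X × Bool) :=
  {p | ∃ w : List E, proj obs w = [] ∧ p.1 ∈ nsteps f {x0} w ∧ p.2 = decide (s ∈ w)}

def druns [DecidableEq E] (f : X → E → Set X) (obs : E → Bool) (s : E)
    (q : Set (X × Bool)) (ω : List E) : Set (X × Bool) :=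
  ω.foldl (dstep f obs s) q

section AuxLemmas
variable (f : X → E → Set X)

private lemma nsteps_append' (S : Set X) (u v : List E) :
    nsteps f S (u ++ v) = nsteps f (nsteps f S u) v :=
  List.foldl_append

private lemma nsteps_empty' (w : List E) : nsteps f ∅ w = ∅ := by
  induction w with
  | nil => rfl
  | cons a w ih =>
    show nsteps f (nstep f ∅ a) w = ∅
    have : nstep f ∅ a = ∅ := by simp [nstep]
    rw [this, ih]

private lemma mem_nsteps_iff' (S : Set X) (w : List E) (y : X) :
    y ∈ nsteps f S w ↔ ∃ x ∈ S, y ∈ nsteps f {x} w := by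
  induction w generalizing S with
  | nil => simp [nsteps]
  | cons a w ih =>
    show y ∈ nsteps f (nstep f S a) w ↔ ∃ x ∈ S, y ∈ nsteps f (nstep f {x} a) w
    rw [ih]
    constructor
    · rintro ⟨z, ⟨x, hx, hz⟩, hy⟩
      refine ⟨x, hx, ?_⟩
      rw [ih]
      exact ⟨z, ⟨x, rfl, hz⟩, hy⟩
    · rintro ⟨x, hx, hy⟩
      rw [ih] at hy
      obtain ⟨z, ⟨x', hx', hz⟩, hy⟩ := hy
      rcases hx' with rfl
      exact ⟨z, ⟨x', hx, hz⟩, hy⟩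

private lemma lang_prefix' (x0 : X) (u v : List E) (h : u ++ v ∈ lang f x0) :
    u ∈ lang f x0 := by
  by_contra hne
  have h0 : nsteps f {x0} u = ∅ := Set.not_nonempty_iff_eq_empty.mp hne
  have h2 : nsteps f {x0} (u ++ v) = ∅ := by rw [nsteps_append', h0, nsteps_empty']
  rw [lang, Set.mem_setOf_eq, h2] at h
  exact Set.not_nonempty_empty h

private lemma extend_n' (x0 : X) (hlive : ∀ w ∈ lang f x0, ∃ a : E, w ++ [a] ∈ lang f x0) :
    ∀ n (lam : List E), lam ∈ lang f x0 → ∃ w : List E, w.length = n ∧ lam ++ w ∈ lang f x0 := by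
  intro n
  induction n with
  | zero => intro lam h; exact ⟨[], rfl, by simpa using h⟩
  | succ n ih =>
    intro lam h
    obtain ⟨w, hw, hmem⟩ := ih lam h
    obtain ⟨a, ha⟩ := hlive _ hmem
    exact ⟨w ++ [a], by simp [hw], by simpa [List.append_assoc] using ha⟩

private lemma extend_obs' (x0 : X) (obs : E → Bool)
    (hlive : ∀ w ∈ lang f x0, ∃ a : E, w ++ [a] ∈ lang f x0)
    (hnuc : ∃ N : ℕ, ∀ u w : List E, u ++ w ∈ lang f x0 →
      (∀ a ∈ w, obs a = false) → w.length ≤ N)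
    (lam : List E) (h : lam ∈ lang f x0) :
    ∃ μ e, proj obs μ = [e] ∧ lam ++ μ ∈ lang f x0 := by
  obtain ⟨N, hN⟩ := hnuc
  obtain ⟨w, hwlen, hwmem⟩ := extend_n' f x0 hlive (N + 1) lam h
  have hnot : ¬ ∀ a ∈ w, obs a = false := by
    intro hall
    have := hN lam w hwmem hall
    omega
  push_neg at hnot
  set t := w.takeWhile (fun a => !obs a) with ht
  set d := w.dropWhile (fun a => !obs a) with hd
  have hw : t ++ d = w := List.takeWhile_append_dropWhile
  have htall : ∀ a ∈ t, obs a = false := by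
    intro a ha
    have := List.mem_takeWhile_imp ha
    simpa using this
  obtain ⟨e, d', hde⟩ : ∃ e d', d = e :: d' := by
    rcases d with _ | ⟨e, d'⟩
    · exfalso
      obtain ⟨a, haw, hao⟩ := hnot
      rw [← hw] at haw
      simp at haw
      exact hao (htall a haw)
    · exact ⟨e, d', rfl⟩
  have heo : obs e = true := by
    have := List.head?_dropWhile_not (fun a => !obs a) w
    rw [← hd, hde] at this
    simpa using this
  refine ⟨t ++ [e], e, ?_, ?_⟩
  · show (t ++ [e]).filter obs = [e]
    rw [List.filter_append]
    have : t.filter obs = [] := by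
      rw [List.filter_eq_nil_iff]; intro a ha; simp [htall a ha]
    simp [this, heo]
  · apply lang_prefix' f x0 _ d'
    have : lam ++ (t ++ [e]) ++ d' = lam ++ w := by
      rw [← hw, hde]; simp
    rw [this]; exact hwmem

private lemma filter_split' (obs : E → Bool) (lam σ : List E) (e : E)
    (h : lam.filter obs = σ ++ [e]) :
    ∃ l1 l2 : List E, lam = l1 ++ l2 ∧ l1.filter obs = σ ∧ l2.filter obs = [e] := by
  induction lam using List.reverseRecOn with
  | nil => simp at h
  | append_singleton l a ih =>
    rw [List.filter_append] at h
    by_cases ha : obs a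
    · simp [List.filter_singleton, ha] at h
      have h2 := h
      obtain ⟨h3, h4⟩ := h2
      refine ⟨l, [a], rfl, h3, ?_⟩
      simp [List.filter_singleton, ha]
      simpa using h4
    · simp [List.filter_singleton, ha] at h
      obtain ⟨l1, l2, rfl, hl1, hl2⟩ := ih h
      refine ⟨l1, l2 ++ [a], by simp, hl1, ?_⟩
      rw [List.filter_append, hl2]
      simp [List.filter_singleton, ha]

private lemma druns_append' [DecidableEq E] (obs : E → Bool) (s : E) (q : Set (X × Bool))
    (u v : List E) :
    druns f obs s q (u ++ v) = druns f obs s (druns f obs s q u) v :=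
  List.foldl_append

private lemma mem_druns_iff' [DecidableEq E] (obs : E → Bool) (s : E) (x0 : X)
    (ω : List E) (p : X × Bool) :
    p ∈ druns f obs s (dinit f obs s x0) ω ↔
      ∃ lam : List E, proj obs lam = ω ∧ p.1 ∈ nsteps f {x0} lam ∧
        p.2 = decide (s ∈ lam) := by
  induction ω using List.reverseRecOn generalizing p with
  | nil => exact Iff.rfl
  | append_singleton ω e ih =>
    rw [druns_append']
    show p ∈ dstep f obs s _ e ↔ _
    constructor
    · rintro ⟨xl, hxl, w, hpw, hpn, hp2⟩
      obtain ⟨lam, hlam, hx1, hx2⟩ := (ih xl).mp hxl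
      refine ⟨lam ++ w, ?_, ?_, ?_⟩
      · show (lam ++ w).filter obs = ω ++ [e]
        rw [proj] at hlam hpw
        rw [List.filter_append, hlam, hpw]
      · rw [nsteps_append', mem_nsteps_iff']
        exact ⟨xl.1, hx1, hpn⟩
      · rw [hp2, hx2]
        simp [List.mem_append]
    · rintro ⟨lam, hlam, hx1, hx2⟩
      obtain ⟨l1, l2, rfl, hl1, hl2⟩ := filter_split' obs lam ω e hlam
      rw [nsteps_append', mem_nsteps_iff'] at hx1
      obtain ⟨z, hz, hp1⟩ := hx1
      refine ⟨(z, decide (s ∈ l1)), ?_, l2, hl2, hp1, ?_⟩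
      · rw [ih _]; exact ⟨l1, hl1, hz, rfl⟩
      · rw [hx2]
        simp [List.mem_append]

end AuxLemmas

/-- G is concealable iff the diagnoser has no secret cycle. -/
theorem concealable_iff_no_secret_cycle [DecidableEq E] [Fintype X]
    (f : X → E → Set X) (obs : E → Bool) (s : E) (x0 : X)
    (hobs : obs s = false)
    (hlive : ∀ w ∈ lang f x0, ∃ a : E, w ++ [a] ∈ lang f x0)
    (hnuc : ∃ N : ℕ, ∀ u w : List E, u ++ w ∈ lang f x0 →
      (∀ a ∈ w, obs a = false) → w.length ≤ N) :
    (∀ lam ∈ lang f x0, s ∈ lam →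
        ∃ lam' ∈ lang f x0, proj obs lam' = proj obs lam ∧ s ∉ lam') ↔
      ¬ (∃ u v : List E, v ≠ [] ∧
          (druns f obs s (dinit f obs s x0) u).Nonempty ∧
          druns f obs s (dinit f obs s x0) (u ++ v) = druns f obs s (dinit f obs s x0) u ∧
          (∀ w : List E, w <+: v →
            ∀ p ∈ druns f obs s (dinit f obs s x0) (u ++ w), p.2 = true)) := by
  have hmem := mem_druns_iff' f obs s x0
  constructor
  · rintro hC ⟨u, v, hv, ⟨p, hp⟩, hcyc, hlab⟩
    have hp2 : p.2 = true := hlab [] ⟨v, rfl⟩ p (by simpa using hp)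
    obtain ⟨lam, hlam, hx1, hx2⟩ := (hmem u p).mp hp
    have hs : s ∈ lam := by
      rw [hp2] at hx2
      exact of_decide_eq_true hx2.symm
    obtain ⟨lam', hlang', hproj', hs'⟩ := hC lam ⟨p.1, hx1⟩ hs
    obtain ⟨x, hx⟩ := hlang'
    have hmem' : ((x, false) : X × Bool) ∈ druns f obs s (dinit f obs s x0) u := by
      rw [hmem u]
      exact ⟨lam', by rw [hproj', hlam], hx, by simp [hs']⟩
    have := hlab [] ⟨v, rfl⟩ (x, false) (by simpa using hmem')
    simp at this
  · intro hns lam hlang hs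
    by_contra hno
    push_neg at hno
    set σ0 := proj obs lam with hσ0
    have hAllTrue : ∀ τ : List E, ∀ p ∈ druns f obs s (dinit f obs s x0) (σ0 ++ τ),
        p.2 = true := by
      intro τ
      induction τ using List.reverseRecOn with
      | nil =>
        intro p hp
        rw [List.append_nil] at hp
        obtain ⟨lam'', hl, hx1, hx2⟩ := (hmem σ0 p).mp hp
        have hsl : s ∈ lam'' := hno lam'' ⟨p.1, hx1⟩ hl
        rw [hx2]; simp [hsl]
      | append_singleton τ e ih =>
        intro p hp
        rw [← List.append_assoc, druns_append'] at hp
        obtain ⟨xl, hxl, w, -, -, hp2⟩ := hp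
        rw [hp2, ih xl hxl]
        simp
    have hNE : ∀ τ : List E, (druns f obs s (dinit f obs s x0) (σ0 ++ τ)).Nonempty →
        ∃ e, (druns f obs s (dinit f obs s x0) (σ0 ++ (τ ++ [e]))).Nonempty := by
      rintro τ ⟨p, hp⟩
      obtain ⟨lam1, hl, hx1, -⟩ := (hmem _ p).mp hp
      obtain ⟨μ, e, hμ, hmem2⟩ := extend_obs' f x0 obs hlive hnuc lam1 ⟨p.1, hx1⟩
      obtain ⟨y, hy⟩ := hmem2
      refine ⟨e, (y, decide (s ∈ lam1 ++ μ)), ?_⟩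
      rw [hmem _]
      refine ⟨lam1 ++ μ, ?_, hy, rfl⟩
      show (lam1 ++ μ).filter obs = σ0 ++ (τ ++ [e])
      rw [proj] at hl hμ
      rw [List.filter_append, hl, hμ, List.append_assoc]
    have hbase : (druns f obs s (dinit f obs s x0) σ0).Nonempty := by
      obtain ⟨x, hx⟩ := hlang
      exact ⟨(x, decide (s ∈ lam)), (hmem _ _).mpr ⟨lam, rfl, hx, rfl⟩⟩
    let F : ℕ → {t : List E // (druns f obs s (dinit f obs s x0) (σ0 ++ t)).Nonempty} :=
      fun n => Nat.rec ⟨[], by simpa using hbase⟩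
        (fun _ ih => ⟨ih.1 ++ [Classical.choose (hNE ih.1 ih.2)],
          Classical.choose_spec (hNE ih.1 ih.2)⟩) n
    have hFsucc : ∀ n, (F (n + 1)).1 = (F n).1 ++ [Classical.choose (hNE (F n).1 (F n).2)] :=
      fun n => rfl
    have hFlen : ∀ n, (F n).1.length = n := by
      intro n
      induction n with
      | zero => rfl
      | succ n ih => rw [hFsucc]; simp [ih]
    have hFpre : ∀ m n : ℕ, m ≤ n → (F m).1 <+: (F n).1 := by
      intro m n h
      induction n, h using Nat.le_induction with
      | base => exact List.prefix_refl _
      | succ n hmn ih => exact ih.trans ⟨_, (hFsucc n).symm⟩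
    have key : ∀ a b : ℕ, a < b →
        druns f obs s (dinit f obs s x0) (σ0 ++ (F a).1) =
          druns f obs s (dinit f obs s x0) (σ0 ++ (F b).1) → False := by
      intro a b hab heq
      obtain ⟨v, hv⟩ := hFpre a b hab.le
      have hvne : v ≠ [] := by
        intro h
        rw [h, List.append_nil] at hv
        have := hFlen a
        rw [hv, hFlen b] at this
        omega
      exact hns ⟨σ0 ++ (F a).1, v, hvne, (F a).2, by
          rw [List.append_assoc, hv, ← heq], by
          intro w hw p hp
          rw [List.append_assoc] at hp
          exact hAllTrue _ p hp⟩
    obtain ⟨a, b, hab, heq⟩ :=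
      Finite.exists_ne_map_eq_of_infinite
        (fun n => druns f obs s (dinit f obs s x0) (σ0 ++ (F n).1))
    rcases hab.lt_or_gt with h | h
    · exact key a b h heq
    · exact key b a h heq.symm
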